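/- The series (2π)^{-1/2}·∑_{n=1}^∞ [√n·(√n + √(n−1))²]^{-1} converges and equals −ζ(1/2)/√(2π), where ζ is the analytically continued Riemann zeta function. -/

import Mathlib

open Real Filter Set

noncomputable def zterm (n : ℕ) (s : ℂ) : ℂ :=
  ((n : ℂ) + 1) ^ (-s) + (((n : ℂ) + 1) ^ (1 - s) - ((n : ℂ) + 2) ^ (1 - s)) / (1 - s)

noncomputable def zG (s : ℂ) : ℂ := ∑' n : ℕ, zterm n s

lemma zterm_eq_integral (n : ℕ) {s : ℂ} (hs : s ≠ 1) :
    zterm n s = ∫ x : ℝ in ((n:ℝ)+1)..((n:ℝ)+2),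
      ((((n:ℝ)+1 : ℝ) : ℂ) ^ (-s) - ((x : ℝ) : ℂ) ^ (-s)) := by
  have h0 : (0:ℝ) ∉ uIcc ((n:ℝ)+1) ((n:ℝ)+2) := by
    rw [uIcc_of_le (by linarith)]
    intro h
    have := h.1
    push_cast at this ⊢
    linarith
  have hint : (∫ x : ℝ in ((n:ℝ)+1)..((n:ℝ)+2), ((x : ℝ) : ℂ) ^ (-s))
      = ((((n:ℝ)+2 : ℝ) : ℂ) ^ (-s + 1) - (((n:ℝ)+1 : ℝ) : ℂ) ^ (-s + 1)) / (-s + 1) := by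
    refine integral_cpow (Or.inr ⟨?_, h0⟩)
    intro h
    apply hs
    have : s = -(-1 : ℂ) := by rw [← h]; ring
    simpa using this
  rw [intervalIntegral.integral_sub intervalIntegrable_const
    (intervalIntegral.intervalIntegrable_cpow (Or.inr h0)), hint, intervalIntegral.integral_const]
  have h1 : ((n:ℝ)+2) - ((n:ℝ)+1) = (1:ℝ) := by ring
  rw [h1, one_smul]
  have hs1 : (1 : ℂ) - s ≠ 0 := by
    intro h
    apply hs
    linear_combination -h
  rw [zterm]
  push_cast
  have h2 : (-s + 1 : ℂ) = 1 - s := by ring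
  rw [h2]
  field_simp
  ring

lemma norm_cpow_sub_le {s : ℂ} (hσ : 0 < s.re) (n : ℕ) {x : ℝ}
    (hx1 : (n:ℝ)+1 ≤ x) (hx2 : x ≤ (n:ℝ)+2) :
    ‖(((n:ℝ)+1 : ℝ) : ℂ) ^ (-s) - ((x : ℝ) : ℂ) ^ (-s)‖
      ≤ ‖s‖ * ((n:ℝ)+1) ^ (-s.re-1) := by
  have hs0 : s ≠ 0 := by
    intro h; rw [h] at hσ; simp at hσ
  have hn1 : (0:ℝ) < (n:ℝ)+1 := by positivity
  have h0 : (0:ℝ) ∉ uIcc ((n:ℝ)+1) x := by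
    rw [uIcc_of_le hx1]
    intro h
    linarith [h.1]
  have hint : (∫ u : ℝ in ((n:ℝ)+1)..x, ((u : ℝ) : ℂ) ^ (-s-1))
      = (((x : ℝ) : ℂ) ^ (-s-1+1) - (((n:ℝ)+1 : ℝ) : ℂ) ^ (-s-1+1)) / (-s-1+1) := by
    refine integral_cpow (Or.inr ⟨?_, h0⟩)
    intro h
    apply hs0
    linear_combination -h
  have h2 : (-s-1+1 : ℂ) = -s := by ring
  rw [h2] at hint
  have key : (((n:ℝ)+1 : ℝ) : ℂ) ^ (-s) - ((x : ℝ) : ℂ) ^ (-s)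
      = s * ∫ u : ℝ in ((n:ℝ)+1)..x, ((u : ℝ) : ℂ) ^ (-s-1) := by
    rw [eq_div_iff (neg_ne_zero.mpr hs0)] at hint
    linear_combination hint
  rw [key]
  rw [norm_mul]
  have hb : ‖∫ u : ℝ in ((n:ℝ)+1)..x, ((u : ℝ) : ℂ) ^ (-s-1)‖
      ≤ ((n:ℝ)+1) ^ (-s.re-1) * |x - ((n:ℝ)+1)| := by
    apply intervalIntegral.norm_integral_le_of_norm_le_const
    intro u hu
    rw [uIoc_of_le hx1] at hu
    have hu1 : (n:ℝ)+1 < u := hu.1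
    have hupos : (0:ℝ) < u := by linarith
    rw [Complex.norm_cpow_eq_rpow_re_of_pos hupos]
    have hre : (-s-1).re = -s.re - 1 := by simp
    rw [hre]
    exact Real.rpow_le_rpow_of_nonpos hn1 hu1.le (by linarith)
  have habs : |x - ((n:ℝ)+1)| ≤ 1 := by
    rw [abs_of_nonneg (by linarith)]; linarith
  calc ‖s‖ * ‖∫ u : ℝ in ((n:ℝ)+1)..x, ((u : ℝ) : ℂ) ^ (-s-1)‖
      ≤ ‖s‖ * (((n:ℝ)+1) ^ (-s.re-1) * |x - ((n:ℝ)+1)|) := by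
        apply mul_le_mul_of_nonneg_left hb (norm_nonneg s)
    _ ≤ ‖s‖ * (((n:ℝ)+1) ^ (-s.re-1) * 1) := by
        gcongr
    _ = ‖s‖ * ((n:ℝ)+1) ^ (-s.re-1) := by ring

lemma zterm_bound {s : ℂ} (hσ : 0 < s.re) (hs : s ≠ 1) (n : ℕ) :
    ‖zterm n s‖ ≤ ‖s‖ * ((n:ℝ)+1) ^ (-s.re-1) := by
  rw [zterm_eq_integral n hs]
  have := intervalIntegral.norm_integral_le_of_norm_le_const
    (C := ‖s‖ * ((n:ℝ)+1) ^ (-s.re-1))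
    (f := fun x : ℝ => (((n:ℝ)+1 : ℝ) : ℂ) ^ (-s) - ((x : ℝ) : ℂ) ^ (-s))
    (a := (n:ℝ)+1) (b := (n:ℝ)+2) ?_
  · calc _ ≤ (‖s‖ * ((n:ℝ)+1) ^ (-s.re-1)) * |((n:ℝ)+2) - ((n:ℝ)+1)| := this
      _ = ‖s‖ * ((n:ℝ)+1) ^ (-s.re-1) := by
          rw [show ((n:ℝ)+2) - ((n:ℝ)+1) = (1:ℝ) by ring]; simp
  · intro x hx
    rw [uIoc_of_le (by linarith)] at hx
    exact norm_cpow_sub_le hσ n hx.1.le hx.2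

lemma summable_aux {σ : ℝ} (hσ : 0 < σ) :
    Summable (fun n : ℕ => ((n:ℝ)+1) ^ (-σ-1)) := by
  have h : Summable (fun n : ℕ => (n:ℝ) ^ (-σ-1)) :=
    Real.summable_nat_rpow.mpr (by linarith)
  have := (summable_nat_add_iff 1).mpr h
  refine this.congr fun n => ?_
  push_cast
  ring_nf

lemma summable_zterm {s : ℂ} (hσ : 0 < s.re) (hs : s ≠ 1) :
    Summable (fun n : ℕ => zterm n s) :=
  Summable.of_norm_bounded ((summable_aux hσ).mul_left ‖s‖) (zterm_bound hσ hs)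

lemma U_open : IsOpen {s : ℂ | 0 < s.re ∧ s ≠ 1} := by
  have : {s : ℂ | 0 < s.re ∧ s ≠ 1} = (Complex.re ⁻¹' (Ioi 0)) ∩ {(1:ℂ)}ᶜ := by
    ext s
    simp only [mem_setOf_eq, mem_inter_iff, mem_preimage, mem_Ioi, mem_compl_iff,
      mem_singleton_iff]
  rw [this]
  exact (Complex.continuous_re.isOpen_preimage _ isOpen_Ioi).inter isOpen_compl_singleton

lemma zG_differentiableAt {s₀ : ℂ} (h : 0 < s₀.re ∧ s₀ ≠ 1) :
    DifferentiableAt ℂ zG s₀ := by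
  obtain ⟨hσ, hs1⟩ := h
  set r : ℝ := s₀.re / 2 with hr
  have hrpos : 0 < r := by positivity
  set V : Set ℂ := Metric.ball s₀ r ∩ {(1:ℂ)}ᶜ with hV
  have hVopen : IsOpen V := Metric.isOpen_ball.inter isOpen_compl_singleton
  have hs₀V : s₀ ∈ V := ⟨Metric.mem_ball_self hrpos, hs1⟩
  have hre : ∀ w ∈ V, r < w.re ∧ ‖w‖ ≤ ‖s₀‖ + r ∧ w ≠ 1 := by
    intro w hw
    obtain ⟨hw1, hw2⟩ := hw
    rw [Metric.mem_ball, dist_eq_norm] at hw1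
    have h1 : |(w - s₀).re| ≤ ‖w - s₀‖ := Complex.abs_re_le_norm _
    have h2 : (w - s₀).re = w.re - s₀.re := by simp
    constructor
    · rw [h2] at h1
      have := abs_le.mp h1
      have := this.1
      simp only [hr] at *
      linarith [hw1.le, this]
    constructor
    · calc ‖w‖ = ‖s₀ + (w - s₀)‖ := by ring_nf
        _ ≤ ‖s₀‖ + ‖w - s₀‖ := norm_add_le _ _
        _ ≤ ‖s₀‖ + r := by linarith [hw1.le]
    · exact hw2
  have hdiff : DifferentiableOn ℂ (fun w => ∑' n : ℕ, zterm n w) V := by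
    apply Complex.differentiableOn_tsum_of_summable_norm
      (u := fun n : ℕ => (‖s₀‖ + r) * ((n:ℝ)+1) ^ (-r-1))
      ((summable_aux hrpos).mul_left _)
    · intro n
      intro w hw
      have hw1 : w ≠ 1 := hw.2
      have hne : ((n:ℂ)+1) ≠ 0 := Nat.cast_add_one_ne_zero n
      have hne2 : ((n:ℂ)+2) ≠ 0 := by
        have h22 : ((n:ℂ)+2) = (((n+1 : ℕ)):ℂ)+1 := by push_cast; ring
        rw [h22]
        exact Nat.cast_add_one_ne_zero (n+1)
      have h1s : (1:ℂ) - w ≠ 0 := by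
        intro hc
        apply hw1
        linear_combination -hc
      apply DifferentiableWithinAt.add
      · exact ((differentiableAt_id.neg.const_cpow (Or.inl hne))).differentiableWithinAt
      · apply DifferentiableWithinAt.div
        · apply DifferentiableWithinAt.sub
          · exact (((differentiableAt_const _).sub differentiableAt_id).const_cpow
              (Or.inl hne)).differentiableWithinAt
          · exact (((differentiableAt_const _).sub differentiableAt_id).const_cpow
              (Or.inl hne2)).differentiableWithinAt
        · exact ((differentiableAt_const _).sub differentiableAt_id).differentiableWithinAt
        · exact h1s
    · exact hVopen
    · intro n w hw
      obtain ⟨hwr, hwn, hw1⟩ := hre w hw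
      have hwσ : 0 < w.re := lt_trans hrpos hwr
      calc ‖zterm n w‖ ≤ ‖w‖ * ((n:ℝ)+1) ^ (-w.re-1) := zterm_bound hwσ hw1 n
        _ ≤ (‖s₀‖ + r) * ((n:ℝ)+1) ^ (-r-1) := by
            apply mul_le_mul hwn _ (Real.rpow_nonneg (by positivity) _)
              (by positivity)
            apply Real.rpow_le_rpow_of_exponent_le (by simp)
            linarith
  exact (hdiff.differentiableAt (hVopen.mem_nhds hs₀V))

lemma zG_eq_of_one_lt {s : ℂ} (hs : 1 < s.re) :
    zG s = riemannZeta s + 1 / (1 - s) := by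
  have hσ : 0 < s.re := by linarith
  have hs1 : s ≠ 1 := by
    intro h; rw [h] at hs; simp at hs
  have h1s : (1:ℂ) - s ≠ 0 := by
    intro hc; apply hs1; linear_combination -hc
  have ha : Summable (fun n : ℕ => ((n:ℂ)+1) ^ (-s)) := by
    have h := Complex.summable_one_div_nat_cpow.mpr hs
    have h2 := (summable_nat_add_iff 1).mpr h
    refine h2.congr fun n => ?_
    push_cast
    rw [Complex.cpow_neg, one_div]
  have hterm : Summable (fun n : ℕ => zterm n s) := summable_zterm hσ hs1
  set c : ℕ → ℂ := fun n => ((n:ℂ)+1) ^ (1-s) - ((n:ℂ)+2) ^ (1-s) with hc_def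
  have hc : Summable c := by
    have h := (hterm.sub ha).mul_right (1-s)
    refine h.congr fun n => ?_
    simp only [zterm, hc_def]
    field_simp
    ring
  have hps : ∀ N : ℕ, ∑ n ∈ Finset.range N, c n = 1 - ((N:ℂ)+1) ^ (1-s) := by
    intro N
    have := Finset.sum_range_sub' (fun k : ℕ => ((k:ℂ)+1) ^ (1-s)) N
    rw [show (∑ n ∈ Finset.range N, c n)
        = ∑ i ∈ Finset.range N, ((fun k : ℕ => ((k:ℂ)+1) ^ (1-s)) i
          - (fun k : ℕ => ((k:ℂ)+1) ^ (1-s)) (i+1)) from ?_, this]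
    · norm_num
    · apply Finset.sum_congr rfl
      intro n _
      simp only [hc_def]
      push_cast
      ring_nf
  have hc_tsum : ∑' n, c n = 1 := by
    have h1 : Tendsto (fun N : ℕ => ∑ n ∈ Finset.range N, c n) atTop (nhds (∑' n, c n)) :=
      hc.hasSum.tendsto_sum_nat
    have h2 : Tendsto (fun N : ℕ => ∑ n ∈ Finset.range N, c n) atTop (nhds 1) := by
      simp only [hps]
      have h3 : Tendsto (fun N : ℕ => ((N:ℂ)+1) ^ (1-s)) atTop (nhds 0) := by
        rw [tendsto_zero_iff_norm_tendsto_zero]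
        have h4 : Tendsto (fun x : ℝ => x ^ (-(s.re - 1))) atTop (nhds 0) :=
          tendsto_rpow_neg_atTop (by linarith)
        have h5 : Tendsto (fun N : ℕ => (N:ℝ)+1) atTop atTop :=
          tendsto_atTop_add_const_right _ _ tendsto_natCast_atTop_atTop
        have h6 := h4.comp h5
        refine h6.congr fun N => ?_
        simp only [Function.comp]
        have hpos : (0:ℝ) < (N:ℝ)+1 := by positivity
        rw [show ((N:ℂ)+1) = (((N:ℝ)+1 : ℝ) : ℂ) by push_cast; ring,
          Complex.norm_cpow_eq_rpow_re_of_pos hpos]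
        norm_num
      have := (tendsto_const_nhds (x := (1:ℂ))).sub h3
      simpa using this
    exact tendsto_nhds_unique h1 h2
  have hzeta : riemannZeta s = ∑' n : ℕ, ((n:ℂ)+1) ^ (-s) := by
    rw [zeta_eq_tsum_one_div_nat_add_one_cpow hs]
    apply tsum_congr
    intro n
    rw [Complex.cpow_neg, one_div]
  rw [zG]
  have hsplit : ∀ n : ℕ, zterm n s = ((n:ℂ)+1) ^ (-s) + c n * (1-s)⁻¹ := by
    intro n
    simp only [zterm, hc_def, div_eq_mul_inv]
  rw [tsum_congr hsplit, Summable.tsum_add ha (hc.mul_right _), tsum_mul_right, hc_tsum, hzeta]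
  rw [one_mul, one_div]

lemma convex_re_line (a : ℝ) : Convex ℝ {w : ℂ | w.re = a} := by
  have h : {w : ℂ | w.re = a} = {w : ℂ | w.re ≤ a} ∩ {w : ℂ | a ≤ w.re} := by
    ext w
    constructor
    · intro h; exact ⟨le_of_eq h, ge_of_eq h⟩
    · intro h; exact le_antisymm h.1 h.2
  rw [h]
  exact (convex_halfSpace_re_le a).inter (convex_halfSpace_re_ge a)

lemma convex_im_line (a : ℝ) : Convex ℝ {w : ℂ | w.im = a ∧ 0 < w.re} := by
  have h : {w : ℂ | w.im = a ∧ 0 < w.re}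
      = ({w : ℂ | w.im ≤ a} ∩ {w : ℂ | a ≤ w.im}) ∩ {w : ℂ | 0 < w.re} := by
    ext w
    constructor
    · intro h; exact ⟨⟨le_of_eq h.1, ge_of_eq h.1⟩, h.2⟩
    · intro h; exact ⟨le_antisymm h.1.1 h.1.2, h.2⟩
  rw [h]
  exact (((convex_halfSpace_im_le a).inter (convex_halfSpace_im_ge a)).inter
    (convex_halfSpace_re_gt 0))

lemma ne_one_of_re {w : ℂ} (h : w.re ≠ 1) : w ≠ 1 := by
  intro hc
  apply h
  rw [hc]
  simp

lemma ne_one_of_im {w : ℂ} (h : w.im ≠ 0) : w ≠ 1 := by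
  intro hc
  apply h
  rw [hc]
  simp

lemma joinedIn_re_line {y z : ℂ} (ha : 0 < y.re) (ha1 : y.re ≠ 1) (hre : z.re = y.re) :
    JoinedIn {s : ℂ | 0 < s.re ∧ s ≠ 1} y z := by
  have hsub : {w : ℂ | w.re = y.re} ⊆ {s : ℂ | 0 < s.re ∧ s ≠ 1} := by
    intro w hw
    have hw' : w.re = y.re := hw
    exact ⟨hw' ▸ ha, ne_one_of_re (by rw [hw']; exact ha1)⟩
  have hconv := convex_re_line y.re
  have hpc := hconv.isPathConnected ⟨y, rfl⟩
  exact (hpc.joinedIn y rfl z hre).mono hsub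

lemma joinedIn_im_line {y z : ℂ} (him : y.im ≠ 0) (hy : 0 < y.re) (hz : 0 < z.re)
    (hre : z.im = y.im) :
    JoinedIn {s : ℂ | 0 < s.re ∧ s ≠ 1} y z := by
  have hsub : {w : ℂ | w.im = y.im ∧ 0 < w.re} ⊆ {s : ℂ | 0 < s.re ∧ s ≠ 1} := by
    intro w hw
    exact ⟨hw.2, ne_one_of_im (by rw [hw.1]; exact him)⟩
  have hconv := convex_im_line y.im
  have hpc := hconv.isPathConnected ⟨y, ⟨rfl, hy⟩⟩
  exact (hpc.joinedIn y ⟨rfl, hy⟩ z ⟨hre, hz⟩).mono hsub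

lemma U_preconnected : IsPreconnected {s : ℂ | 0 < s.re ∧ s ≠ 1} := by
  have hpc : IsPathConnected {s : ℂ | 0 < s.re ∧ s ≠ 1} := by
    refine ⟨2, ⟨by norm_num, by norm_num⟩, ?_⟩
    intro y hy
    obtain ⟨hy0, hy1⟩ := hy
    suffices h : JoinedIn {s : ℂ | 0 < s.re ∧ s ≠ 1} y 2 by exact h.symm
    have h2re : (2:ℂ).re = 2 := by simp
    by_cases hyre : y.re = 1
    · -- y.im ≠ 0 in this case
      have him : y.im ≠ 0 := by
        intro h0
        apply hy1
        apply Complex.ext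
        · simpa using hyre
        · simpa using h0
      have j1 : JoinedIn {s : ℂ | 0 < s.re ∧ s ≠ 1} y (⟨2, y.im⟩ : ℂ) :=
        joinedIn_im_line him hy0 (by norm_num) rfl
      have j2 : JoinedIn {s : ℂ | 0 < s.re ∧ s ≠ 1} (⟨2, y.im⟩ : ℂ) 2 := by
        have := joinedIn_re_line (y := (⟨2, y.im⟩ : ℂ)) (z := 2) (by norm_num) (by norm_num)
          (by rw [h2re])
        exact this
      exact j1.trans j2
    · have j1 : JoinedIn {s : ℂ | 0 < s.re ∧ s ≠ 1} y (⟨y.re, 1⟩ : ℂ) :=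
        joinedIn_re_line hy0 hyre rfl
      have j2 : JoinedIn {s : ℂ | 0 < s.re ∧ s ≠ 1} (⟨y.re, 1⟩ : ℂ) (⟨2, 1⟩ : ℂ) := by
        apply joinedIn_im_line (y := (⟨y.re, 1⟩ : ℂ)) (z := (⟨2, 1⟩ : ℂ))
        · norm_num
        · exact hy0
        · norm_num
        · rfl
      have j3 : JoinedIn {s : ℂ | 0 < s.re ∧ s ≠ 1} (⟨2, 1⟩ : ℂ) 2 := by
        apply joinedIn_re_line (y := (⟨2, 1⟩ : ℂ)) (z := 2)
        · show (0:ℝ) < 2; norm_num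
        · show (2:ℝ) ≠ 1; norm_num
        · rw [h2re]
      exact (j1.trans j2).trans j3

  exact hpc.isConnected.isPreconnected

lemma zG_eq_zeta : ∀ s ∈ {s : ℂ | 0 < s.re ∧ s ≠ 1},
    zG s = riemannZeta s + 1 / (1 - s) := by
  have hU : IsOpen {s : ℂ | 0 < s.re ∧ s ≠ 1} := U_open
  have hf : AnalyticOnNhd ℂ zG {s : ℂ | 0 < s.re ∧ s ≠ 1} :=
    DifferentiableOn.analyticOnNhd
      (fun s hs => (zG_differentiableAt hs).differentiableWithinAt) hU
  have hg : AnalyticOnNhd ℂ (fun s => riemannZeta s + 1 / (1 - s))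
      {s : ℂ | 0 < s.re ∧ s ≠ 1} := by
    apply DifferentiableOn.analyticOnNhd _ hU
    intro s hs
    have h1s : (1:ℂ) - s ≠ 0 := by
      intro hc; apply hs.2; linear_combination -hc
    exact ((differentiableAt_riemannZeta hs.2).add
      ((differentiableAt_const _).div
        ((differentiableAt_const _).sub differentiableAt_id) h1s)).differentiableWithinAt
  have h2m : (2:ℂ) ∈ {s : ℂ | 0 < s.re ∧ s ≠ 1} := by
    constructor
    · norm_num
    · norm_num
  refine hf.eqOn_of_preconnected_of_eventuallyEq hg U_preconnected h2m ?_
  have hmem : {s : ℂ | 1 < s.re} ∈ nhds (2:ℂ) := by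
    apply (Complex.continuous_re.isOpen_preimage _ isOpen_Ioi).mem_nhds
    norm_num
  filter_upwards [hmem] with z hz using zG_eq_of_one_lt hz

noncomputable def rterm (n : ℕ) : ℝ :=
  1 / Real.sqrt ((n:ℝ)+1) + 2 * Real.sqrt ((n:ℝ)+1) - 2 * Real.sqrt ((n:ℝ)+2)

lemma zterm_half (n : ℕ) : zterm n (1/2 : ℂ) = ((rterm n : ℝ) : ℂ) := by
  have h1 : ((n:ℂ)+1) = (((n:ℝ)+1 : ℝ) : ℂ) := by push_cast; ring
  have h2 : ((n:ℂ)+2) = (((n:ℝ)+2 : ℝ) : ℂ) := by push_cast; ring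
  have hn1 : (0:ℝ) ≤ (n:ℝ)+1 := by positivity
  have hn2 : (0:ℝ) ≤ (n:ℝ)+2 := by positivity
  have e1 : (-(1/2) : ℂ) = (((-(1/2)) : ℝ) : ℂ) := by norm_num
  have e2 : ((1:ℂ) - 1/2) = (((1/2) : ℝ) : ℂ) := by norm_num
  rw [zterm, h1, h2, e1, e2, ← Complex.ofReal_cpow hn1, ← Complex.ofReal_cpow hn1,
    ← Complex.ofReal_cpow hn2, rterm]
  have hs1 : Real.sqrt ((n:ℝ)+1) = ((n:ℝ)+1) ^ ((1:ℝ)/2) := Real.sqrt_eq_rpow _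
  have hs2 : Real.sqrt ((n:ℝ)+2) = ((n:ℝ)+2) ^ ((1:ℝ)/2) := Real.sqrt_eq_rpow _
  have hneg : ((n:ℝ)+1) ^ ((-(1/2)) : ℝ) = (((n:ℝ)+1) ^ ((1:ℝ)/2))⁻¹ := by
    rw [← Real.rpow_neg hn1]
  rw [hs1, hs2, hneg]
  push_cast
  have hpos : (0:ℝ) < ((n:ℝ)+1) ^ ((1:ℝ)/2) := by
    apply Real.rpow_pos_of_pos
    positivity
  field_simp
  ring

lemma half_mem : (1/2 : ℂ) ∈ {s : ℂ | 0 < s.re ∧ s ≠ 1} := by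
  constructor
  · norm_num
  · norm_num

lemma summable_rterm : Summable rterm := by
  have h := summable_zterm (s := 1/2) half_mem.1 half_mem.2
  rw [summable_congr zterm_half] at h
  exact Complex.summable_ofReal.mp h

lemma tsum_rterm : ∑' n, rterm n = (riemannZeta (1/2)).re + 2 := by
  have h1 : zG (1/2) = riemannZeta (1/2) + 1 / (1 - 1/2) := zG_eq_zeta _ half_mem
  have h2 : zG (1/2) = ((∑' n, rterm n : ℝ) : ℂ) := by
    rw [zG, tsum_congr zterm_half, ← Complex.ofReal_tsum]
  rw [h2] at h1
  have h3 : (1 : ℂ) / (1 - 1/2) = 2 := by norm_num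
  rw [h3] at h1
  have := congrArg Complex.re h1
  simpa using this

noncomputable def eseq (n : ℕ) : ℝ := 2 * Real.sqrt ((n:ℝ)+1) - 2 * Real.sqrt (n:ℝ)

lemma eseq_nonneg (n : ℕ) : 0 ≤ eseq n := by
  have := Real.sqrt_le_sqrt (show (n:ℝ) ≤ (n:ℝ)+1 by linarith)
  simp only [eseq]
  linarith

lemma eseq_antitone (n : ℕ) : eseq (n+1) ≤ eseq n := by
  simp only [eseq]
  push_cast
  have hre : ((n:ℝ)+1+1) = ((n:ℝ)+2) := by ring
  rw [hre]
  set a := Real.sqrt (n:ℝ) with hadef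
  set b := Real.sqrt ((n:ℝ)+1) with hbdef
  set c := Real.sqrt ((n:ℝ)+2) with hcdef
  have ha0 : 0 ≤ a := Real.sqrt_nonneg _
  have hb0 : 0 ≤ b := Real.sqrt_nonneg _
  have hc0 : 0 ≤ c := Real.sqrt_nonneg _
  have ha2 : a^2 = (n:ℝ) := Real.sq_sqrt (by positivity)
  have hb2 : b^2 = (n:ℝ)+1 := Real.sq_sqrt (by positivity)
  have hc2 : c^2 = (n:ℝ)+2 := Real.sq_sqrt (by positivity)
  have h1 : (a + c)^2 ≤ (2*b)^2 := by nlinarith [sq_nonneg (a - c)]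
  have h2 : a + c ≤ 2*b := by
    have h3 : a + c = Real.sqrt ((a+c)^2) := (Real.sqrt_sq (by linarith)).symm
    have h4 : 2*b = Real.sqrt ((2*b)^2) := (Real.sqrt_sq (by linarith)).symm
    rw [h3, h4]
    exact Real.sqrt_le_sqrt h1
  linarith

lemma eseq_tendsto : Tendsto eseq atTop (nhds 0) := by
  have h4 : Tendsto (fun x : ℝ => x ^ ((-(1/2)):ℝ)) atTop (nhds 0) :=
    tendsto_rpow_neg_atTop (by norm_num)
  have h5 : Tendsto (fun n : ℕ => 2 * ((n:ℝ) ^ ((-(1/2)):ℝ))) atTop (nhds 0) := by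
    have := (h4.comp tendsto_natCast_atTop_atTop).const_mul (2:ℝ)
    simpa using this
  apply squeeze_zero' (Filter.Eventually.of_forall eseq_nonneg) _ h5
  filter_upwards [Filter.eventually_ge_atTop 1] with n hn
  have hn0 : (0:ℝ) < (n:ℝ) := by exact_mod_cast hn
  set a := Real.sqrt (n:ℝ) with hadef
  set b := Real.sqrt ((n:ℝ)+1) with hbdef
  have ha0 : 0 < a := Real.sqrt_pos.mpr hn0
  have hb0 : 0 ≤ b := Real.sqrt_nonneg _
  have ha2 : a^2 = (n:ℝ) := Real.sq_sqrt (by positivity)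
  have hb2 : b^2 = (n:ℝ)+1 := Real.sq_sqrt (by positivity)
  have hba : a ≤ b := Real.sqrt_le_sqrt (by linarith)
  have hrw : (n:ℝ) ^ ((-(1/2)):ℝ) = a⁻¹ := by
    rw [hadef, Real.sqrt_eq_rpow, ← Real.rpow_neg hn0.le]
  rw [eseq, hrw, ← hadef, ← hbdef]
  rw [show (2:ℝ) * a⁻¹ = 2 / a by rw [div_eq_mul_inv]]
  rw [show (2:ℝ) * b - 2 * a = (2 * b - 2 * a) by ring, le_div_iff₀ ha0]
  nlinarith [mul_le_mul_of_nonneg_left hba hb0]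

lemma summable_d : Summable (fun n => eseq n - eseq (n+1)) := by
  apply summable_of_sum_range_le (c := eseq 0)
  · intro n
    linarith [eseq_antitone n]
  · intro n
    rw [Finset.sum_range_sub' eseq n]
    linarith [eseq_nonneg n]

lemma tsum_d : ∑' n, (eseq n - eseq (n+1)) = 2 := by
  have h1 := summable_d.hasSum.tendsto_sum_nat
  have h2 : Tendsto (fun N : ℕ => ∑ n ∈ Finset.range N, (eseq n - eseq (n+1)))
      atTop (nhds 2) := by
    have h3 : ∀ N, ∑ n ∈ Finset.range N, (eseq n - eseq (n+1)) = eseq 0 - eseq N :=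
      fun N => Finset.sum_range_sub' eseq N
    simp only [h3]
    have h0 : eseq 0 = 2 := by simp [eseq, Real.sqrt_one]
    rw [show (2:ℝ) = eseq 0 - 0 by rw [h0]; ring]
    exact (tendsto_const_nhds).sub eseq_tendsto
  exact tendsto_nhds_unique h1 h2

lemma T_eq (n : ℕ) :
    1 / (Real.sqrt ((n : ℝ) + 1) * (Real.sqrt ((n : ℝ) + 1) + Real.sqrt (n : ℝ)) ^ 2)
      = (eseq n - eseq (n+1)) - rterm n := by
  simp only [eseq, rterm]
  push_cast
  set a := Real.sqrt ((n:ℝ)+1) with hadef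
  set b := Real.sqrt (n:ℝ) with hbdef
  have ha0 : 0 < a := Real.sqrt_pos.mpr (by positivity)
  have hb0 : 0 ≤ b := Real.sqrt_nonneg _
  have ha2 : a^2 = (n:ℝ)+1 := Real.sq_sqrt (by positivity)
  have hb2 : b^2 = (n:ℝ) := Real.sq_sqrt (by positivity)
  have hab : 0 < a + b := by linarith
  have hkey : (a - b) * (a + b) = 1 := by nlinarith
  have hgoal : 1 / (a * (a + b)^2) = 2*a - 2*b - 1/a := by
    have hane : a ≠ 0 := ha0.ne'
    have habne : a + b ≠ 0 := hab.ne'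
    field_simp
    ring_nf
    linear_combination (-2*a^2 - 2*a*b - 1) * hkey
  rw [hgoal]
  ring

/-- The series `(2π)^{-1/2}·∑_{n≥1} [√n·(√n + √(n−1))²]^{-1}` converges and equals
`−ζ(1/2)/√(2π)`. -/
theorem kingman_constant_eq_zeta :
    Summable (fun n : ℕ =>
      1 / (Real.sqrt ((n : ℝ) + 1) * (Real.sqrt ((n : ℝ) + 1) + Real.sqrt (n : ℝ)) ^ 2)) ∧
    (Real.sqrt (2 * π))⁻¹ *
        (∑' n : ℕ,
          1 / (Real.sqrt ((n : ℝ) + 1) * (Real.sqrt ((n : ℝ) + 1) + Real.sqrt (n : ℝ)) ^ 2))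
      = -(riemannZeta (1 / 2)).re / Real.sqrt (2 * π) := by
  have hsum : Summable (fun n : ℕ =>
      1 / (Real.sqrt ((n : ℝ) + 1) * (Real.sqrt ((n : ℝ) + 1) + Real.sqrt (n : ℝ)) ^ 2)) := by
    rw [summable_congr T_eq]
    exact summable_d.sub summable_rterm
  refine ⟨hsum, ?_⟩
  have hts : (∑' n : ℕ,
      1 / (Real.sqrt ((n : ℝ) + 1) * (Real.sqrt ((n : ℝ) + 1) + Real.sqrt (n : ℝ)) ^ 2))
      = -(riemannZeta (1/2)).re := by
    rw [tsum_congr T_eq, Summable.tsum_sub summable_d summable_rterm, tsum_d, tsum_rterm]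
    ring
  rw [hts, inv_mul_eq_div]
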